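/- Let D be the unique ℚ-linear derivation of the polynomial ring ℚ[x,y] satisfying D(x) = xy and D(y) = x². Then for every n ≥ 1, D^n(x) = Σ_{k=0}^{⌊n/2⌋} T(n,k) x^{2k+1} y^{n-2k}, where T(n,k) denotes the number of permutations of [n] with exactly k exterior peaks. -/

import Mathlib

open MvPolynomial

/-- The number of exterior peaks of a word given as a list: indices `i` (1-based) with
`1 < i < n` and `l_{i-1} < l_i > l_{i+1}`, or `i = 1` and `l_1 > l_2`. -/
def extPeaksList {α : Type*} [LinearOrder α] (l : List α) : ℕ :=
  ((l.zip (l.tail.zip l.tail.tail)).countP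
      fun p => decide (p.1 < p.2.1 ∧ p.2.2 < p.2.1)) +
    (match l with
     | a :: b :: _ => if b < a then 1 else 0
     | _ => 0)

/-- The number of exterior peaks of a permutation of `[n]`, viewing the permutation as
the word `π 0, π 1, …, π (n-1)`. -/
def extPeaks {n : ℕ} (π : Equiv.Perm (Fin n)) : ℕ :=
  extPeaksList (List.ofFn fun i => (π i : ℕ))

/-- `extPeakCount n k` is the number of permutations of `[n]` with exactly `k` exterior peaks. -/
noncomputable def extPeakCount (n k : ℕ) : ℕ :=
  Nat.card {π : Equiv.Perm (Fin n) // extPeaks π = k}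



open List

def pkP (w : List ℕ) (j : ℕ) : Prop :=
  j + 1 < w.length ∧ w.getD (j+1) 0 < w.getD j 0 ∧ (j = 0 ∨ w.getD (j-1) 0 < w.getD j 0)

section gd
variable {w : List ℕ} {m i : ℕ}
lemma length_ins (hi : i ≤ w.length) : (insertIdx w i m).length = w.length + 1 :=
  length_insertIdx_of_le_length hi _
lemma gd_ins_lt (hi : i ≤ w.length) {j : ℕ} (hj : j < i) :
    (insertIdx w i m).getD j 0 = w.getD j 0 := by
  have hjl : j < w.length := lt_of_lt_of_le hj hi
  rw [getD_eq_getElem _ _ (by rw [length_ins hi]; omega), getD_eq_getElem _ _ hjl]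
  exact getElem_insertIdx_of_lt hj _
lemma gd_ins_self (hi : i ≤ w.length) :
    (insertIdx w i m).getD i 0 = m := by
  rw [getD_eq_getElem _ _ (by rw [length_ins hi]; omega)]
  exact getElem_insertIdx_self _
lemma gd_ins_ge (hi : i ≤ w.length) {j : ℕ} (hj : i ≤ j) :
    (insertIdx w i m).getD (j+1) 0 = w.getD j 0 := by
  rcases lt_or_ge j w.length with hjl | hjl
  · rw [getD_eq_getElem _ _ (by rw [length_ins hi]; omega), getD_eq_getElem _ _ hjl]
    obtain ⟨k, rfl⟩ := Nat.exists_eq_add_of_le hj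
    exact getElem_insertIdx_add_succ w m i k (by omega)
  · rw [getD_eq_default _ _ (by rw [length_ins hi]; omega), getD_eq_default _ _ hjl]
end gd

section char
variable {w : List ℕ} {m i : ℕ} (hi : i ≤ w.length)
  (hlt : ∀ j < w.length, w.getD j 0 < m)
include hi

lemma pk_ins_a {j : ℕ} (hj : j + 1 < i) : pkP (insertIdx w i m) j ↔ pkP w j := by
  unfold pkP
  rw [length_ins hi, gd_ins_lt hi (by omega : j < i), gd_ins_lt hi (by omega : j + 1 < i)]
  have h3 : (insertIdx w i m).getD (j-1) 0 = w.getD (j-1) 0 := gd_ins_lt hi (by omega)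
  rw [h3]
  constructor
  · rintro ⟨-, h2, h4⟩; exact ⟨by omega, h2, h4⟩
  · rintro ⟨-, h2, h4⟩; exact ⟨by omega, h2, h4⟩

include hlt

lemma pk_ins_b (h1 : 1 ≤ i) : ¬ pkP (insertIdx w i m) (i-1) := by
  rintro ⟨-, h2, -⟩
  rw [(by omega : i - 1 + 1 = i), gd_ins_self hi, gd_ins_lt hi (by omega)] at h2
  exact absurd h2 (by have := hlt (i-1) (by omega); omega)

lemma pk_ins_c : pkP (insertIdx w i m) i ↔ i < w.length := by
  constructor
  · rintro ⟨h1, -⟩; rw [length_ins hi] at h1; omega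
  · intro h
    refine ⟨by rw [length_ins hi]; omega, ?_, ?_⟩
    · rw [gd_ins_self hi, gd_ins_ge hi le_rfl]; exact hlt i h
    · rcases Nat.eq_zero_or_pos i with h0 | h0
      · exact Or.inl h0
      · rw [gd_ins_self hi, gd_ins_lt hi (by omega)]
        exact Or.inr (hlt (i-1) (by omega))

lemma pk_ins_d : ¬ pkP (insertIdx w i m) (i+1) := by
  rintro ⟨h1, -, h3⟩
  rw [length_ins hi] at h1
  rcases h3 with h3 | h3
  · omega
  · rw [Nat.add_sub_cancel, gd_ins_self hi, gd_ins_ge hi le_rfl] at h3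
    exact absurd h3 (by have := hlt i (by omega); omega)

omit hlt in
omit hlt in
lemma pk_ins_e {j : ℕ} (hj : i + 2 ≤ j) : pkP (insertIdx w i m) j ↔ pkP w (j-1) := by
  obtain ⟨j, rfl⟩ : ∃ j', j = j' + 1 := ⟨j - 1, by omega⟩
  unfold pkP
  rw [length_ins hi, Nat.add_sub_cancel, gd_ins_ge hi (by omega : i ≤ j),
    gd_ins_ge hi (by omega : i ≤ j + 1)]
  have h3 : (insertIdx w i m).getD j 0 = w.getD (j - 1) 0 := by
    have := gd_ins_ge hi (m := m) (by omega : i ≤ j - 1)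
    rw [(by omega : j - 1 + 1 = j)] at this
    exact this
  rw [h3]
  constructor
  · rintro ⟨h1, h2, h4⟩
    refine ⟨by omega, h2, ?_⟩
    rcases h4 with h4 | h4
    · omega
    · exact Or.inr h4
  · rintro ⟨h1, h2, h4⟩
    refine ⟨by omega, h2, ?_⟩
    rcases h4 with h4 | h4
    · omega
    · exact Or.inr h4

end char

instance (w : List ℕ) (j : ℕ) : Decidable (pkP w j) := by unfold pkP; exact inferInstance
def pkb (w : List ℕ) (j : ℕ) : ℕ := if pkP w j then 1 else 0
def epk (w : List ℕ) : ℕ := ∑ j ∈ Finset.range w.length, pkb w j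
lemma pkb_le (w j) : pkb w j ≤ 1 := by unfold pkb; split <;> omega
def deadn (w : List ℕ) (i : ℕ) : ℕ :=
  (if 1 ≤ i then pkb w (i-1) else 0) + (if i < w.length then pkb w i else 0)

lemma not_pkP_succ {w : List ℕ} {j : ℕ} (h : pkP w j) : ¬ pkP w (j+1) := by
  rintro ⟨-, h2, h3⟩
  rcases h3 with h3 | h3
  · omega
  · simp only [Nat.add_sub_cancel] at h3
    exact absurd h.2.1 (by omega)
lemma pkb_last (w : List ℕ) : pkb w (w.length - 1) = 0 := by
  unfold pkb; rw [if_neg]; rintro ⟨h1, -⟩; omega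

lemma pkb_ge (w : List ℕ) {j : ℕ} (hj : w.length ≤ j + 1) : pkb w j = 0 := by
  unfold pkb; rw [if_neg]; rintro ⟨h1, -⟩; omega


lemma pkb_congr {w w' : List ℕ} {j j' : ℕ} (h : pkP w j ↔ pkP w' j') :
    pkb w j = pkb w' j' := by
  unfold pkb
  by_cases hc : pkP w j
  · rw [if_pos hc, if_pos (h.mp hc)]
  · rw [if_neg hc, if_neg (fun hc' => hc (h.mpr hc'))]

lemma pkb_eq_zero {w : List ℕ} {j : ℕ} (h : ¬ pkP w j) : pkb w j = 0 := if_neg h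

/-- Key counting lemma for the insertion of a new maximum. -/
lemma epk_insert {w : List ℕ} {m i : ℕ} (hi : i ≤ w.length)
    (hlt : ∀ j < w.length, w.getD j 0 < m) :
    epk (insertIdx w i m) + deadn w i = epk w + (if i < w.length then 1 else 0) := by
  have hA : ∀ u : List ℕ, 1 ≤ i → ∑ j ∈ Finset.Ico 0 i, pkb u j
      = ∑ t ∈ Finset.range (i-1), pkb u t + pkb u (i-1) := by
    intro u h1
    rw [Finset.sum_Ico_eq_sum_range]
    simp only [Nat.sub_zero, Nat.zero_add]
    conv_lhs => rw [show i = (i-1)+1 by omega]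
    rw [Finset.sum_range_succ]
  have hAv : 1 ≤ i → ∑ j ∈ Finset.Ico 0 i, pkb (insertIdx w i m) j
      = ∑ t ∈ Finset.range (i-1), pkb w t := by
    intro h1
    rw [hA _ h1, pkb_eq_zero (pk_ins_b hi hlt h1), Finset.sum_congr rfl
      (fun t ht => pkb_congr (pk_ins_a hi (by simp only [Finset.mem_range] at ht; omega)))]
    omega
  have hBv : ∑ j ∈ Finset.Ico i (w.length+1), pkb (insertIdx w i m) j
      = (if i < w.length then 1 else 0) + ∑ j ∈ Finset.Ico (i+1) w.length, pkb w j := by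
    rw [Finset.sum_eq_sum_Ico_succ_bot (by omega : i < w.length + 1)]
    have hci : pkb (insertIdx w i m) i = if i < w.length then 1 else 0 := by
      unfold pkb
      by_cases h : i < w.length
      · rw [if_pos ((pk_ins_c hi hlt).2 h), if_pos h]
      · rw [if_neg (fun hc => h ((pk_ins_c hi hlt).1 hc)), if_neg h]
    rcases Nat.lt_or_ge i w.length with h | h
    · rw [Finset.sum_eq_sum_Ico_succ_bot (by omega : i + 1 < w.length + 1)]
      rw [hci, pkb_eq_zero (pk_ins_d hi hlt)]
      have he : ∑ j ∈ Finset.Ico (i+2) (w.length+1), pkb (insertIdx w i m) j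
          = ∑ j ∈ Finset.Ico (i+1) w.length, pkb w j := by
        calc ∑ j ∈ Finset.Ico (i+2) (w.length+1), pkb (insertIdx w i m) j
            = ∑ t ∈ Finset.range (w.length - (i+1)), pkb (insertIdx w i m) (i + 2 + t) := by
              have heq : w.length + 1 - (i + 2) = w.length - (i+1) := by omega
              rw [Finset.sum_Ico_eq_sum_range]
              simp only [heq]
          _ = ∑ t ∈ Finset.range (w.length - (i+1)), pkb w (i + 1 + t) := by
              exact Finset.sum_congr rfl (fun t ht => pkb_congr
                ((pk_ins_e hi (by omega : i + 2 ≤ i + 2 + t)).trans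
                  (by rw [(by omega : i + 2 + t - 1 = i + 1 + t)])))
          _ = ∑ j ∈ Finset.Ico (i+1) w.length, pkb w j := by
              rw [Finset.sum_Ico_eq_sum_range]
      rw [he]; omega
    · have hni : ¬ i < w.length := by omega
      have hie : i = w.length := by omega
      rw [hci, if_neg hni, hie]
      simp
  have hkv : epk (insertIdx w i m)
      = ∑ j ∈ Finset.Ico 0 i, pkb (insertIdx w i m) j
        + ∑ j ∈ Finset.Ico i (w.length+1), pkb (insertIdx w i m) j := by
    rw [epk, length_ins hi, Finset.range_eq_Ico,
      ← Finset.sum_Ico_consecutive _ (Nat.zero_le i) (by omega)]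
  have hk : epk w = ∑ j ∈ Finset.Ico 0 i, pkb w j + ∑ j ∈ Finset.Ico i w.length, pkb w j := by
    rw [epk, Finset.range_eq_Ico, ← Finset.sum_Ico_consecutive _ (Nat.zero_le i) (by omega)]
  rcases Nat.eq_zero_or_pos i with h0 | h0
  · subst h0
    have hw0 : ∑ j ∈ Finset.Ico 0 0, pkb w j = 0 := by simp
    have hv0 : ∑ j ∈ Finset.Ico 0 0, pkb (insertIdx w 0 m) j = 0 := by simp
    rw [hkv, hv0, hBv, hk, hw0]
    unfold deadn
    rcases Nat.eq_zero_or_pos w.length with hl | hl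
    · simp [hl]
    · have h2 : (0:ℕ) < w.length := hl
      rw [Finset.sum_eq_sum_Ico_succ_bot h2]
      rw [if_neg (by omega : ¬ (1:ℕ) ≤ 0), if_pos h2, if_pos h2]
      simp only [Nat.zero_add]
      omega
  · have h1 : 1 ≤ i := h0
    have hsplit : ∑ j ∈ Finset.Ico 0 i, pkb w j
        = ∑ t ∈ Finset.range (i-1), pkb w t + pkb w (i-1) := hA w h1
    rcases Nat.lt_or_ge i w.length with h | h
    · have hsplit2 : ∑ j ∈ Finset.Ico i w.length, pkb w j
          = pkb w i + ∑ j ∈ Finset.Ico (i+1) w.length, pkb w j :=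
        Finset.sum_eq_sum_Ico_succ_bot h _
      rw [hkv, hAv h1, hBv, hk, hsplit, hsplit2]
      unfold deadn
      rw [if_pos h1, if_pos h, if_pos h]
      omega
    · have hin : i = w.length := by omega
      have hempty : Finset.Ico i w.length = ∅ := by rw [hin]; simp
      have hlast : pkb w (i-1) = 0 := pkb_eq_zero (by rintro ⟨hc, -⟩; omega)
      rw [hkv, hAv h1, hBv, hk, hsplit, hempty, hlast]
      unfold deadn
      rw [if_pos h1, if_neg (by omega : ¬ i < w.length), if_neg (by omega : ¬ i < w.length)]
      have : Finset.Ico (i+1) w.length = ∅ := by rw [hin]; simp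
      rw [this, hlast]
      simp

lemma deadn_le_one (w : List ℕ) (i : ℕ) : deadn w i ≤ 1 := by
  unfold deadn
  by_cases h1 : 1 ≤ i
  · by_cases h2 : i < w.length
    · rw [if_pos h1, if_pos h2]
      by_cases hp : pkP w (i-1)
      · have : ¬ pkP w i := by
          have := not_pkP_succ hp
          rwa [(by omega : i - 1 + 1 = i)] at this
        rw [pkb_eq_zero this]
        have := pkb_le w (i-1); omega
      · rw [pkb_eq_zero hp]
        have := pkb_le w i; omega
    · rw [if_pos h1, if_neg h2]
      have := pkb_le w (i-1); omega
  · rw [if_neg h1]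
    split
    · have := pkb_le w i; omega
    · omega

lemma sum_deadn (w : List ℕ) : ∑ i ∈ Finset.range w.length, deadn w i = 2 * epk w := by
  unfold deadn
  rw [Finset.sum_add_distrib]
  have h2 : ∑ i ∈ Finset.range w.length, (if i < w.length then pkb w i else 0) = epk w := by
    rw [epk]
    exact Finset.sum_congr rfl (fun i hi => by
      rw [if_pos (Finset.mem_range.mp hi)])
  have h1 : ∑ i ∈ Finset.range w.length, (if 1 ≤ i then pkb w (i-1) else 0) = epk w := by
    rcases Nat.eq_zero_or_pos w.length with hl | hl
    · rw [hl, epk, hl]; simp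
    · obtain ⟨t, ht⟩ : ∃ t, w.length = t + 1 := ⟨w.length - 1, by omega⟩
      rw [ht, Finset.sum_range_succ']
      simp only [if_neg (by omega : ¬ (1:ℕ) ≤ 0), add_zero,
        if_pos (by omega : ∀ {i : ℕ}, 1 ≤ i + 1), Nat.add_sub_cancel]
      have : epk w = ∑ i ∈ Finset.range t, pkb w i + pkb w t := by
        rw [epk, ht, Finset.sum_range_succ]
      rw [this]
      have : pkb w t = 0 := by
        have := pkb_last w
        rwa [ht, Nat.add_sub_cancel] at this
      simp [this]
  omega

lemma two_epk_le (w : List ℕ) : 2 * epk w ≤ w.length := by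
  rw [← sum_deadn w]
  calc ∑ i ∈ Finset.range w.length, deadn w i
      ≤ ∑ _i ∈ Finset.range w.length, 1 :=
        Finset.sum_le_sum (fun i _ => deadn_le_one w i)
    _ = w.length := by simp

lemma aux_eq_map (m : ℕ) (w : List ℕ) :
    List.permutations'Aux m w = (List.range (w.length + 1)).map (fun i => insertIdx w i m) := by
  induction w with
  | nil => rfl
  | cons b l ih =>
      rw [permutations'Aux, ih]
      conv_rhs => rw [List.length_cons, List.range_succ_eq_map]
      simp [List.map_map, Function.comp_def, List.insertIdx_succ_cons]

lemma listsum_range {M : Type*} [AddCommMonoid M] (n : ℕ) (f : ℕ → M) :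
    ((List.range n).map f).sum = ∑ i ∈ Finset.range n, f i := by
  induction n with
  | zero => simp
  | succ n ih =>
      rw [List.range_succ, Finset.sum_range_succ, List.map_append, List.sum_append, ih]
      simp

/-- Summing any function of the peak count over all insertions of a new maximum. -/
lemma insert_sum {M : Type*} [AddCommMonoid M] (g : ℕ → M) (w : List ℕ) (m : ℕ)
    (hlt : ∀ j < w.length, w.getD j 0 < m) :
    ((List.permutations'Aux m w).map (fun v => g (epk v))).sum
      = (2 * epk w + 1) • g (epk w) + (w.length - 2 * epk w) • g (epk w + 1) := by
  rw [aux_eq_map, List.map_map, Function.comp_def, listsum_range]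
  have hKn : epk (insertIdx w (w.length) m) = epk w := by
    have h := epk_insert (le_refl w.length) hlt
    have hd : deadn w w.length = 0 := by
      unfold deadn
      rw [if_neg (lt_irrefl _)]
      split
      · rcases Nat.eq_zero_or_pos w.length with hl | hl
        · omega
        · have := pkb_last w; omega
      · omega
    rw [hd, if_neg (lt_irrefl _)] at h
    omega
  have hK : ∀ i < w.length, epk (insertIdx w i m)
      = if deadn w i = 1 then epk w else epk w + 1 := by
    intro i hi
    have h := epk_insert (le_of_lt hi) hlt
    rw [if_pos hi] at h
    have := deadn_le_one w i
    split <;> omega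
  rw [Finset.sum_range_succ, hKn]
  have hsum : ∑ i ∈ Finset.range w.length, g (epk (insertIdx w i m))
      = ∑ i ∈ Finset.range w.length,
          (if deadn w i = 1 then g (epk w) else g (epk w + 1)) := by
    refine Finset.sum_congr rfl (fun i hi => ?_)
    rw [hK i (Finset.mem_range.mp hi)]
    split <;> rfl
  have hcard : (Finset.filter (fun i => deadn w i = 1) (Finset.range w.length)).card
      = 2 * epk w := by
    rw [← sum_deadn w, Finset.card_filter]
    refine Finset.sum_congr rfl (fun i hi => ?_)
    have := deadn_le_one w i
    split <;> omega
  have hcard' : (Finset.filter (fun i => ¬ deadn w i = 1) (Finset.range w.length)).card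
      = w.length - 2 * epk w := by
    have := Finset.card_filter_add_card_filter_not
      (s := Finset.range w.length) (fun i => deadn w i = 1)
    rw [Finset.card_range] at this
    omega
  rw [hsum, Finset.sum_ite, Finset.sum_const, Finset.sum_const, hcard, hcard']
  rw [succ_nsmul (g (epk w)) (2 * epk w)]
  abel


lemma countP_eq_sum_getD {α : Type*} (p : α → Bool) (l : List α) (d : α) :
    l.countP p = ∑ j ∈ Finset.range l.length, (if p (l.getD j d) = true then 1 else 0) := by
  induction l with
  | nil => simp
  | cons a l ih =>
      rw [List.countP_cons, List.length_cons, Finset.sum_range_succ']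
      simp only [List.getD_cons_succ, List.getD_cons_zero]
      rw [ih]

lemma zip_length (w : List ℕ) :
    (w.zip (w.tail.zip w.tail.tail)).length = w.length - 2 := by
  simp only [List.length_zip, List.length_tail]
  omega

lemma zip_getD {w : List ℕ} {j : ℕ} (hj : j + 2 < w.length) :
    (w.zip (w.tail.zip w.tail.tail)).getD j (0,(0,0))
      = (w.getD j 0, (w.getD (j+1) 0, w.getD (j+2) 0)) := by
  have h1 : j < (w.zip (w.tail.zip w.tail.tail)).length := by rw [zip_length]; omega
  rw [List.getD_eq_getElem _ _ h1, List.getElem_zip, List.getElem_zip, List.getElem_tail,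
    List.getElem_tail, List.getElem_tail]
  rw [List.getD_eq_getElem _ _ (by omega), List.getD_eq_getElem _ _ (by omega),
    List.getD_eq_getElem _ _ (by omega)]

lemma inner_eq (w : List ℕ) : (w.zip (w.tail.zip w.tail.tail)).countP
      (fun p => decide (p.1 < p.2.1 ∧ p.2.2 < p.2.1))
      = ∑ j ∈ Finset.range (w.length - 2), pkb w (j+1) := by
  rw [countP_eq_sum_getD _ _ (0,(0,0)), zip_length]
  refine Finset.sum_congr rfl (fun j hj => ?_)
  have hj2 : j + 2 < w.length := by
    have := Finset.mem_range.mp hj; omega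
  rw [zip_getD hj2]
  simp only [decide_eq_true_eq]
  unfold pkb
  by_cases hc : w.getD j 0 < w.getD (j+1) 0 ∧ w.getD (j+2) 0 < w.getD (j+1) 0
  · rw [if_pos hc, if_pos ⟨by omega, hc.2, Or.inr (by simpa using hc.1)⟩]
  · rw [if_neg hc, if_neg ?_]
    rintro ⟨-, h2, h3⟩
    rcases h3 with h3 | h3
    · omega
    · simp only [Nat.add_sub_cancel] at h3
      exact hc ⟨h3, h2⟩

lemma extPeaksList_eq_epk (w : List ℕ) : extPeaksList w = epk w := by
  match w with
  | [] => simp [extPeaksList, epk]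
  | [a] => simp [extPeaksList, epk, pkb, pkP]
  | a :: b :: r =>
      have key : extPeaksList (a :: b :: r)
          = ((a::b::r).zip ((a::b::r).tail.zip (a::b::r).tail.tail)).countP
              (fun p => decide (p.1 < p.2.1 ∧ p.2.2 < p.2.1))
            + (if b < a then 1 else 0) := rfl
      have hpk0 : (if b < a then (1:ℕ) else 0) = pkb (a::b::r) 0 := by
        unfold pkb pkP
        simp only [List.getD_cons_succ, List.getD_cons_zero, List.length_cons]
        by_cases h : b < a
        · rw [if_pos h, if_pos ⟨by omega, h, Or.inl trivial⟩]
        · rw [if_neg h, if_neg (by rintro ⟨-, h2, -⟩; exact h h2)]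
      rw [key, hpk0, inner_eq, epk]
      have hlen : (a :: b :: r).length = r.length + 2 := by simp
      have hlast : pkb (a::b::r) (r.length + 1) = 0 := by
        have := pkb_last (a::b::r); rw [hlen] at this; simpa using this
      rw [hlen, (by omega : r.length + 2 - 2 = r.length),
        Finset.sum_range_succ (n := r.length + 1), Finset.sum_range_succ', hlast]
      omega

open MvPolynomial in
lemma Dterm (D : Derivation ℚ (MvPolynomial (Fin 2) ℚ) (MvPolynomial (Fin 2) ℚ))
    (hx : D (X 0) = X 0 * X 1) (hy : D (X 1) = X 0 ^ 2) (k e : ℕ) :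
    D (X 0 ^ (2*k+1) * X 1 ^ e)
      = (2*k+1) • (X 0 ^ (2*k+1) * X 1 ^ (e+1)) + e • (X 0 ^ (2*k+3) * X 1 ^ (e-1)) := by
  rw [Derivation.leibniz, Derivation.leibniz_pow, Derivation.leibniz_pow, hx, hy,
    Nat.add_sub_cancel]
  simp only [smul_eq_mul, nsmul_eq_mul]
  cases e with
  | zero =>
      push_cast
      ring
  | succ e' =>
      simp only [Nat.add_sub_cancel]
      push_cast
      ring

/-- The list of all permutation words of `{0, …, n-1}`. -/
def perms (n : ℕ) : List (List ℕ) := List.permutations' ((List.range n).reverse)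

lemma perms_succ (n : ℕ) : perms (n+1) = (perms n).flatMap (List.permutations'Aux n) := by
  unfold perms
  rw [List.range_succ, List.reverse_append]
  rfl

lemma mem_perms_length {n : ℕ} {w : List ℕ} (hw : w ∈ perms n) : w.length = n := by
  have h := List.mem_permutations'.mp hw
  rw [h.length_eq, List.length_reverse, List.length_range]

lemma mem_perms_lt {n : ℕ} {w : List ℕ} (hw : w ∈ perms n) :
    ∀ j < w.length, w.getD j 0 < n := by
  intro j hj
  have h := List.mem_permutations'.mp hw
  rw [List.getD_eq_getElem _ _ hj]
  have hmem : w[j] ∈ w := List.getElem_mem hj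
  have := h.mem_iff.mp hmem
  rw [List.mem_reverse, List.mem_range] at this
  exact this

lemma sum_map_flatMap {α β M : Type*} [AddCommMonoid M] (L : List α) (f : α → List β)
    (g : β → M) :
    ((L.flatMap f).map g).sum = (L.map (fun a => ((f a).map g).sum)).sum := by
  rw [List.map_flatMap, List.flatMap_def, List.sum_flatten, List.map_map, Function.comp_def]

open MvPolynomial in
lemma main_sum (D : Derivation ℚ (MvPolynomial (Fin 2) ℚ) (MvPolynomial (Fin 2) ℚ))
    (hx : D (X 0) = X 0 * X 1) (hy : D (X 1) = X 0 ^ 2) :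
    ∀ n, 1 ≤ n → (⇑D)^[n] (X 0)
      = ((perms n).map (fun w => X 0 ^ (2 * epk w + 1) * X 1 ^ (n - 2 * epk w))).sum := by
  refine Nat.le_induction ?_ ?_
  · have h1 : perms 1 = [[0]] := rfl
    have h2 : epk [0] = 0 := rfl
    rw [h1, List.map_cons, List.map_nil, List.sum_cons, List.sum_nil, h2]
    simp [hx]
  · intro n hn ih
    rw [Function.iterate_succ_apply', ih, map_list_sum, List.map_map, perms_succ,
      sum_map_flatMap]
    refine congrArg List.sum (List.map_congr_left (fun w hw => ?_))
    have hlen : w.length = n := mem_perms_length hw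
    have hlt : ∀ j < w.length, w.getD j 0 < n := mem_perms_lt hw
    have h2k : 2 * epk w ≤ n := hlen ▸ two_epk_le w
    have hins := insert_sum (M := MvPolynomial (Fin 2) ℚ) (fun j => X 0 ^ (2*j+1) * X 1 ^ ((n+1) - 2*j)) w n hlt
    rw [hlen] at hins
    rw [hins, Function.comp_apply, Dterm D hx hy]
    have e1 : n - 2 * epk w + 1 = (n+1) - 2 * epk w := by omega
    have e2 : n - 2 * epk w - 1 = (n+1) - 2 * (epk w + 1) := by omega
    have e3 : 2 * epk w + 3 = 2 * (epk w + 1) + 1 := by omega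
    rw [e1, e2, e3]

lemma group_sum {M : Type*} [AddCommMonoid M] (g : ℕ → M) (st : List ℕ → ℕ)
    (L : List (List ℕ)) (N : ℕ) (hb : ∀ w ∈ L, st w < N) :
    (L.map (fun w => g (st w))).sum
      = ∑ k ∈ Finset.range N, (L.countP (fun w => st w = k)) • g k := by
  induction L with
  | nil => simp
  | cons a L ih =>
      rw [List.map_cons, List.sum_cons, ih (fun w hw => hb w (List.mem_cons_of_mem a hw))]
      simp only [List.countP_cons, add_smul]
      rw [Finset.sum_add_distrib]
      have : ∑ k ∈ Finset.range N,
          (if (fun w => decide (st w = k)) a = true then 1 else 0) • g k = g (st a) := by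
        have hmem : st a ∈ Finset.range N := Finset.mem_range.mpr (hb a (List.mem_cons_self))
        rw [Finset.sum_congr rfl (fun k _ => ?_), Finset.sum_ite_eq (Finset.range N) (st a) g,
          if_pos hmem]
        simp only [decide_eq_true_eq]
        by_cases h : st a = k
        · rw [if_pos h, if_pos h, one_smul]
        · rw [if_neg h, if_neg h, zero_smul]
      rw [this]
      abel

lemma perms_nodup (n : ℕ) : (perms n).Nodup := by
  have h1 : ((List.range n).reverse).Nodup := by
    rw [List.nodup_reverse]; exact List.nodup_range
  have h2 := List.nodup_permutations _ h1
  exact ((List.permutations_perm_permutations' _).nodup_iff).mp h2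

lemma countP_perms (n k : ℕ) :
    extPeakCount n k = (perms n).countP (fun w => epk w = k) := by
  classical
  rw [extPeakCount, Nat.card_eq_fintype_card, Fintype.card_subtype,
    List.countP_eq_length_filter]
  have hnd : ((perms n).filter (fun w => decide (epk w = k))).Nodup :=
    (perms_nodup n).filter _
  rw [← List.toFinset_card_of_nodup hnd]
  have hmem_t : ∀ v : List ℕ,
      v ∈ ((perms n).filter (fun w => decide (epk w = k))).toFinset
        ↔ (v ~ (List.range n).reverse ∧ epk v = k) := by
    intro v
    simp only [List.mem_toFinset, List.mem_filter, perms, List.mem_permutations',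
      decide_eq_true_eq]
  refine Finset.card_bij (fun π _ => List.ofFn (fun i => ((π : Equiv.Perm (Fin n)) i : ℕ)))
    ?_ ?_ ?_
  · intro π hπ
    rw [Finset.mem_filter] at hπ
    rw [hmem_t]
    constructor
    · refine List.perm_of_nodup_nodup_toFinset_eq ?_ ?_ ?_
      · rw [List.nodup_ofFn]
        exact fun i j hij => π.injective (Fin.val_injective hij)
      · rw [List.nodup_reverse]; exact List.nodup_range
      · ext x
        simp only [List.mem_toFinset, List.mem_ofFn, List.mem_reverse, List.mem_range]
        constructor
        · rintro ⟨i, rfl⟩; exact (π i).isLt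
        · intro hx; exact ⟨π.symm ⟨x, hx⟩, by simp⟩
    · rw [← extPeaksList_eq_epk]
      exact hπ.2
  · intro π hπ π' hπ' h
    have := List.ofFn_inj.mp h
    ext i
    exact congrFun this i
  · intro v hv
    rw [hmem_t] at hv
    obtain ⟨hperm, hvk⟩ := hv
    have hlen : v.length = n := by
      rw [hperm.length_eq, List.length_reverse, List.length_range]
    have hvnd : v.Nodup := hperm.nodup_iff.mpr
      (by rw [List.nodup_reverse]; exact List.nodup_range)
    have hlt : ∀ (i : Fin n), v[(i : ℕ)]'(by omega) < n := by
      intro i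
      have hmem : v[(i:ℕ)]'(by omega) ∈ v := List.getElem_mem (by omega)
      have := hperm.mem_iff.mp hmem
      rwa [List.mem_reverse, List.mem_range] at this
    set f : Fin n → Fin n := fun i => ⟨v[(i : ℕ)]'(by omega), hlt i⟩ with hf
    have hinj : Function.Injective f := by
      intro i j hij
      have h1 : v.get (Fin.cast hlen.symm i) = v.get (Fin.cast hlen.symm j) := by
        simpa [hf, Fin.ext_iff, List.get_eq_getElem] using hij
      have := List.nodup_iff_injective_get.mp hvnd h1
      exact Fin.ext (by simpa [Fin.ext_iff] using this)
    refine ⟨Equiv.ofBijective f (Finite.injective_iff_bijective.mp hinj), ?_, ?_⟩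
    · rw [Finset.mem_filter]
      refine ⟨Finset.mem_univ _, ?_⟩
      rw [extPeaks]
      have : (List.ofFn fun i => ((Equiv.ofBijective f
          (Finite.injective_iff_bijective.mp hinj)) i : ℕ)) = v := by
        refine List.ext_getElem (by simp [hlen]) (fun i h1 h2 => ?_)
        simp [hf, Equiv.ofBijective]
      rw [this, extPeaksList_eq_epk, hvk]
    · refine List.ext_getElem (by simp [hlen]) (fun i h1 h2 => ?_)
      simp [hf, Equiv.ofBijective]

theorem stmt12
    (D : Derivation ℚ (MvPolynomial (Fin 2) ℚ) (MvPolynomial (Fin 2) ℚ))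
    (hx : D (X 0) = X 0 * X 1) (hy : D (X 1) = X 0 ^ 2)
    (n : ℕ) (hn : 1 ≤ n) :
    (⇑D)^[n] (X 0) =
      ∑ k ∈ Finset.range (n / 2 + 1),
        (extPeakCount n k : MvPolynomial (Fin 2) ℚ) * X 0 ^ (2 * k + 1) * X 1 ^ (n - 2 * k) := by
  have hb : ∀ w ∈ perms n, epk w < n / 2 + 1 := by
    intro w hw
    have h1 := two_epk_le w
    have h2 := mem_perms_length hw
    omega
  rw [main_sum D hx hy n hn,
    group_sum (fun j => X 0 ^ (2*j+1) * X 1 ^ (n - 2*j)) epk (perms n) (n/2+1) hb]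
  refine Finset.sum_congr rfl (fun k hk => ?_)
  rw [← countP_perms n k, nsmul_eq_mul, mul_assoc]
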